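/- arXiv:1507.03915 — 2 statements merged into one kernel-verified Lean document; each statement's English description precedes it below -/
import Mathlib

section
/- Let A be a complete discrete valuation ring with residue field k, and suppose A and k have the same characteristic and k is perfect. Then A is isomorphic (as a ring) to the formal power series ring k[[T]]. -/
open IsLocalRing Finset Polynomial

set_option linter.unusedSectionVars false
set_option maxHeartbeats 1000000

variable {A : Type} [CommRing A] [IsDomain A] [IsDiscreteValuationRing A]
  [IsAdicComplete (maximalIdeal A) A]

lemma smul_top_pow' (I : Ideal A) (n : ℕ) : (I ^ n • ⊤ : Submodule A A) = I ^ n := by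
  rw [← Ideal.one_eq_top, smul_eq_mul, mul_one]

lemma haus_unique {x y : A} (h : ∀ n, x - y ∈ maximalIdeal A ^ n) : x = y :=
  sub_eq_zero.mp ((IsAdicComplete.toIsHausdorff (I := maximalIdeal A) (M := A)).haus (x - y)
    (fun n => by rw [SModEq.zero, smul_top_pow']; exact h n))

lemma exists_lim (f : ℕ → A) (hf : ∀ m n : ℕ, m ≤ n → f n - f m ∈ maximalIdeal A ^ m) :
    ∃ L, ∀ n, L - f n ∈ maximalIdeal A ^ n := by
  obtain ⟨L, hL⟩ := (IsAdicComplete.toIsPrecomplete (I := maximalIdeal A) (M := A)).prec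
    (f := f) (fun {m n} h => by rw [SModEq.sub_mem, smul_top_pow']
                                exact (maximalIdeal A ^ m).neg_mem_iff.mp (by simpa using hf m n h))
  exact ⟨L, fun n => by
    have := hL n; rw [SModEq.sub_mem, smul_top_pow'] at this
    exact (maximalIdeal A ^ n).neg_mem_iff.mp (by simpa using this)⟩

theorem equiv_of_section (s : ResidueField A →+* A) (hs : ∀ x, residue A (s x) = x) :
    Nonempty (A ≃+* PowerSeries (ResidueField A)) := by
  obtain ⟨π, hπ⟩ := IsDiscreteValuationRing.exists_irreducible A
  set k := ResidueField A
  have hpow : ∀ n : ℕ, maximalIdeal A ^ n = Ideal.span {π ^ n} := fun n => by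
    rw [hπ.maximalIdeal_eq, Ideal.span_singleton_pow]
  have hmem : ∀ (x : A) (n : ℕ), x ∈ maximalIdeal A ^ n ↔ π ^ n ∣ x := fun x n => by
    rw [hpow, Ideal.mem_span_singleton]
  set P : PowerSeries k → ℕ → A :=
    fun σ n => ∑ i ∈ range n, s (PowerSeries.coeff i σ) * π ^ i with hP
  -- Cauchy
  have hC : ∀ σ (m n : ℕ), m ≤ n → P σ n - P σ m ∈ maximalIdeal A ^ m := by
    intro σ m n h
    simp only [hP]
    rw [← Finset.sum_Ico_eq_sub _ h]
    refine Ideal.sum_mem _ (fun i hi => ?_)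
    rw [hmem]
    exact Dvd.dvd.mul_left (pow_dvd_pow π (mem_Ico.mp hi).1) _
  choose F hF using fun σ => exists_lim (P σ) (hC σ)
  have Funiq : ∀ σ (x : A), (∀ n, x - P σ n ∈ maximalIdeal A ^ n) → F σ = x := by
    intro σ x hx
    refine haus_unique (fun n => ?_)
    have := (maximalIdeal A ^ n).sub_mem (hF σ n) (hx n)
    simpa using this

  -- multiplicativity of partial sums mod m^n
  have hmul : ∀ σ τ (n : ℕ), P σ n * P τ n - P (σ * τ) n ∈ maximalIdeal A ^ n := by
    intro σ τ n
    set f : ℕ × ℕ → A := fun p =>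
      (s (PowerSeries.coeff p.1 σ) * π ^ p.1) * (s (PowerSeries.coeff p.2 τ) * π ^ p.2) with hf
    have hsub : (range n).biUnion Finset.HasAntidiagonal.antidiagonal ⊆ range n ×ˢ range n := by
      intro p hp
      simp only [Finset.mem_biUnion, Finset.mem_range, Finset.HasAntidiagonal.mem_antidiagonal] at hp
      obtain ⟨i, hi, rfl⟩ := hp
      simp only [Finset.mem_product, Finset.mem_range]
      omega
    have h1 : P (σ * τ) n = ∑ p ∈ (range n).biUnion Finset.HasAntidiagonal.antidiagonal, f p := by
      simp only [hP]; rw [Finset.sum_biUnion]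
      · refine Finset.sum_congr rfl (fun i _ => ?_)
        rw [PowerSeries.coeff_mul, map_sum, Finset.sum_mul]
        refine Finset.sum_congr rfl (fun p hp => ?_)
        have : p.1 + p.2 = i := Finset.HasAntidiagonal.mem_antidiagonal.mp hp
        rw [hf, map_mul, ← this, pow_add]; ring
      · intro a _ b _ hab
        simp only [Finset.disjoint_left]
        intro p hpa hpb
        exact hab (by rw [← Finset.HasAntidiagonal.mem_antidiagonal.mp hpa, ← Finset.HasAntidiagonal.mem_antidiagonal.mp hpb])
    have h2 : P σ n * P τ n = ∑ p ∈ range n ×ˢ range n, f p := by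
      simp only [hP]; rw [Finset.sum_mul_sum, ← Finset.sum_product']
    rw [h1, h2, ← Finset.sum_sdiff_eq_sub hsub]
    refine Ideal.sum_mem _ (fun p hp => ?_)
    have hge : n ≤ p.1 + p.2 := by
      have h3 := (Finset.mem_sdiff.mp hp).2
      simp only [Finset.mem_biUnion, Finset.mem_range, Finset.HasAntidiagonal.mem_antidiagonal] at h3
      by_contra hc
      exact h3 ⟨p.1 + p.2, by omega, rfl⟩
    rw [hmem]
    calc π ^ n ∣ π ^ (p.1 + p.2) := pow_dvd_pow π hge
    _ ∣ f p := ⟨s (PowerSeries.coeff p.1 σ) * s (PowerSeries.coeff p.2 τ), by rw [hf, pow_add]; ring⟩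
  -- build the ring hom
  have Fadd : ∀ σ τ, F (σ + τ) = F σ + F τ := by
    intro σ τ
    refine Funiq _ _ (fun n => ?_)
    have : P (σ + τ) n = P σ n + P τ n := by
      simp only [hP]; rw [← Finset.sum_add_distrib]
      refine Finset.sum_congr rfl (fun i _ => ?_)
      rw [map_add, map_add, add_mul]
    rw [this]
    have := (maximalIdeal A ^ n).add_mem (hF σ n) (hF τ n)
    simpa [sub_add_sub_comm] using this
  have Fone : F 1 = 1 := by
    refine Funiq _ _ (fun n => ?_)
    rcases Nat.eq_zero_or_pos n with rfl | hn
    · simp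
    · have : P 1 n = 1 := by
        simp only [hP]
        have : ∀ i ∈ range n, s (PowerSeries.coeff i 1) * π ^ i
            = if i = 0 then 1 else 0 := by
          intro i _
          rcases eq_or_ne i 0 with rfl | h
          · simp
          · simp [PowerSeries.coeff_one, h]
        rw [Finset.sum_congr rfl this, Finset.sum_ite_eq' (range n) 0 (fun _ => (1:A))]
        simp [Finset.mem_range, hn]
      simp [this]
  have Fmul : ∀ σ τ, F (σ * τ) = F σ * F τ := by
    intro σ τ
    refine Funiq _ _ (fun n => ?_)
    have h1 : F σ * F τ - P σ n * P τ n ∈ maximalIdeal A ^ n := by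
      have : F σ * F τ - P σ n * P τ n
          = F σ * (F τ - P τ n) + P τ n * (F σ - P σ n) := by ring
      rw [this]
      exact (maximalIdeal A ^ n).add_mem
        (Ideal.mul_mem_left _ _ (hF τ n)) (Ideal.mul_mem_left _ _ (hF σ n))
    have := (maximalIdeal A ^ n).add_mem h1 (hmul σ τ n)
    simpa using this
  have Fzero : F 0 = 0 := by
    refine Funiq _ _ (fun n => ?_)
    simp [hP]
  set Φ : PowerSeries k →+* A :=
    { toFun := F, map_one' := Fone, map_mul' := Fmul, map_zero' := Fzero, map_add' := Fadd }
    with hΦ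
  have hπn0 : ∀ n : ℕ, π ^ n ≠ 0 := fun n => pow_ne_zero n hπ.ne_zero
  have hinj : Function.Injective Φ := by
    have : ∀ σ, Φ σ = 0 → σ = 0 := by
      intro σ h0
      have hPn : ∀ n, P σ n ∈ maximalIdeal A ^ n := by
        intro n
        have := hF σ n
        rw [hΦ] at h0
        simp only [RingHom.coe_mk, MonoidHom.coe_mk, OneHom.coe_mk] at h0
        rw [h0, zero_sub] at this
        exact (maximalIdeal A ^ n).neg_mem_iff.mp this
      ext j
      induction j using Nat.strong_induction_on with
      | _ j ih =>
        have hPj : P σ (j + 1) = s (PowerSeries.coeff j σ) * π ^ j := by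
          simp only [hP]; rw [Finset.sum_range_succ]
          have : ∀ i ∈ range j, s (PowerSeries.coeff i σ) * π ^ i = 0 := by
            intro i hi
            have hc0 : PowerSeries.coeff i σ = 0 := by
              simpa using ih i (Finset.mem_range.mp hi)
            rw [hc0, map_zero, zero_mul]
          rw [Finset.sum_eq_zero this, zero_add]
        have := hPn (j + 1)
        rw [hPj, hmem, pow_succ] at this
        have hdvd : π ∣ s (PowerSeries.coeff j σ) :=
          (mul_dvd_mul_iff_right (hπn0 j)).mp (by rwa [mul_comm (π ^ j) π] at this)
        have : s (PowerSeries.coeff j σ) ∈ maximalIdeal A := by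
          rw [hπ.maximalIdeal_eq, Ideal.mem_span_singleton]; exact hdvd
        have := Ideal.Quotient.eq_zero_iff_mem.mpr this
        rw [show (Ideal.Quotient.mk (maximalIdeal A)) (s (PowerSeries.coeff j σ))
            = residue A (s (PowerSeries.coeff j σ)) from rfl, hs] at this
        simpa using (show (PowerSeries.coeff j σ : k) = 0 from this)
    intro a b hab
    have h0 : Φ (a - b) = 0 := by rw [map_sub, hab, sub_self]
    exact sub_eq_zero.mp (this _ h0)
  have hsurj : Function.Surjective Φ := by
    intro a
    have hstep : ∀ c : A, ∃ b, c - s (residue A c) = π * b := by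
      intro c
      have : c - s (residue A c) ∈ maximalIdeal A := by
        rw [← Ideal.Quotient.eq_zero_iff_mem]
        show residue A _ = 0
        rw [map_sub, hs, sub_self]
      rw [hπ.maximalIdeal_eq, Ideal.mem_span_singleton] at this
      obtain ⟨b, hb⟩ := this
      exact ⟨b, hb⟩
    choose g hg using hstep
    set rem : ℕ → A := fun n => g^[n] a with hrem
    set σ : PowerSeries k := PowerSeries.mk (fun n => residue A (rem n)) with hσ
    have key : ∀ n, a - P σ n = π ^ n * rem n := by
      intro n
      induction n with
      | zero => simp [hP, hrem]
      | succ n ih =>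
        have hr : rem (n + 1) = g (rem n) := by
          rw [hrem]; exact Function.iterate_succ_apply' g n a
        have : P σ (n + 1) = P σ n + s (residue A (rem n)) * π ^ n := by
          simp only [hP]; rw [Finset.sum_range_succ, hσ]
          simp
        rw [this, hr]
        have hgr := hg (rem n)
        calc a - (P σ n + s (residue A (rem n)) * π ^ n)
            = (a - P σ n) - s (residue A (rem n)) * π ^ n := by ring
          _ = π ^ n * rem n - s (residue A (rem n)) * π ^ n := by rw [ih]
          _ = π ^ n * (rem n - s (residue A (rem n))) := by ring
          _ = π ^ n * (π * g (rem n)) := by rw [hgr]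
          _ = π ^ (n + 1) * g (rem n) := by ring
    refine ⟨σ, ?_⟩
    show F σ = a
    refine Funiq _ _ (fun n => ?_)
    rw [key n, hmem]
    exact Dvd.intro _ rfl
  exact ⟨(RingEquiv.ofBijective Φ ⟨hinj, hsurj⟩).symm⟩


lemma res_eq_of_sub_mem {x y : A} (h : x - y ∈ maximalIdeal A) :
    residue A x = residue A y := by
  have h2 : residue A (x - y) = 0 := Ideal.Quotient.eq_zero_iff_mem.mpr h
  rwa [map_sub, sub_eq_zero] at h2

lemma pow_p_step (p : ℕ) (hp : p.Prime) (hk : CharP (ResidueField A) p)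
    {x y : A} {j : ℕ} (hj : 1 ≤ j) (h : x - y ∈ maximalIdeal A ^ j) :
    x ^ p - y ^ p ∈ maximalIdeal A ^ (j + 1) := by
  have hxy : x - y ∈ maximalIdeal A := Ideal.pow_le_self (by omega) h
  have hr : residue A x = residue A y := res_eq_of_sub_mem hxy
  have hS : (∑ i ∈ range p, x ^ i * y ^ (p - 1 - i)) ∈ maximalIdeal A := by
    rw [← Ideal.Quotient.eq_zero_iff_mem]
    show residue A _ = 0
    rw [map_sum]
    have : ∀ i ∈ range p, residue A (x ^ i * y ^ (p - 1 - i))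
        = residue A y ^ (p - 1) := by
      intro i hi
      rw [map_mul, map_pow, map_pow, hr, ← pow_add]
      congr 1
      have := Finset.mem_range.mp hi
      omega
    rw [Finset.sum_congr rfl this, Finset.sum_const, Finset.card_range, nsmul_eq_mul,
      CharP.cast_eq_zero (ResidueField A) p, zero_mul]
  have hid : x ^ p - y ^ p = (∑ i ∈ range p, x ^ i * y ^ (p - 1 - i)) * (x - y) :=
    (geom_sum₂_mul x y p).symm
  rw [hid, mul_comm, pow_succ]
  exact Ideal.mul_mem_mul h hS

lemma pow_p_mem (p : ℕ) (hp : p.Prime) (hk : CharP (ResidueField A) p)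
    {a b : A} (h : a - b ∈ maximalIdeal A) (n : ℕ) :
    a ^ p ^ n - b ^ p ^ n ∈ maximalIdeal A ^ (n + 1) := by
  induction n with
  | zero => simpa using h
  | succ n ih =>
    have := pow_p_step p hp hk (by omega) ih
    rw [← pow_mul, ← pow_mul, ← pow_succ] at this
    exact this

theorem exists_section_char_p (p : ℕ) (hp : p.Prime) (hA : CharP A p)
    (hk : CharP (ResidueField A) p) [PerfectField (ResidueField A)] :
    ∃ s : ResidueField A →+* A, ∀ x, residue A (s x) = x := by
  haveI : Fact p.Prime := ⟨hp⟩
  haveI : ExpChar (ResidueField A) p := ExpChar.prime hp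
  haveI : ExpChar A p := ExpChar.prime hp
  set k := ResidueField A
  set φ := frobeniusEquiv k p with hφ
  choose σ₀ hσ₀ using IsLocalRing.residue_surjective (R := A)
  set t : ℕ → k → A := fun n x => σ₀ (φ.symm^[n] x) ^ p ^ n with ht
  -- iterated frobenius facts
  have hiter_pow : ∀ (n : ℕ) (x : k), (φ.symm^[n] x) ^ p ^ n = x := by
    intro n
    induction n with
    | zero => intro x; simp
    | succ n ih =>
      intro x
      rw [Function.iterate_succ_apply, pow_succ, pow_mul, ih, frobeniusEquiv_symm_pow_p]
  have hres_t : ∀ (n : ℕ) (x : k), residue A (t n x) = x := by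
    intro n x
    rw [ht]
    show residue A (σ₀ (φ.symm^[n] x) ^ p ^ n) = x
    rw [map_pow, hσ₀, hiter_pow]
  -- key: if residue u = residue v then u^{p^n} ≡ v^{p^n} mod m^{n+1}
  have hkey : ∀ (u v : A) (n : ℕ), residue A u = residue A v →
      u ^ p ^ n - v ^ p ^ n ∈ maximalIdeal A ^ (n + 1) := by
    intro u v n h
    refine pow_p_mem p hp hk ?_ n
    rw [← Ideal.Quotient.eq_zero_iff_mem]
    show residue A _ = 0
    rw [map_sub, h, sub_self]
  -- Cauchy
  have hstep : ∀ (x : k) (n : ℕ), t (n + 1) x - t n x ∈ maximalIdeal A ^ (n + 1) := by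
    intro x n
    have h1 : residue A (σ₀ (φ.symm^[n + 1] x) ^ p) = residue A (σ₀ (φ.symm^[n] x)) := by
      rw [map_pow, hσ₀, hσ₀, Function.iterate_succ_apply', frobeniusEquiv_symm_pow_p]
    have := hkey _ _ n h1
    rw [← pow_mul, ← pow_succ'] at this
    exact this
  have hcau : ∀ (x : k) (m n : ℕ), m ≤ n → t n x - t m x ∈ maximalIdeal A ^ m := by
    intro x m n h
    induction n, h using Nat.le_induction with
    | base => simp
    | succ n hmn ih =>
      have h2 : t (n + 1) x - t n x ∈ maximalIdeal A ^ m :=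
        Ideal.pow_le_pow_right (by omega) (hstep x n)
      have := (maximalIdeal A ^ m).add_mem h2 ih
      simpa [sub_add_sub_cancel] using this
  choose T hT using fun x => exists_lim (fun n => t n x) (hcau x)
  have Tuniq : ∀ (x : k) (y : A), (∀ n, y - t n x ∈ maximalIdeal A ^ n) → T x = y := by
    intro x y hy
    refine haus_unique (fun n => ?_)
    have := (maximalIdeal A ^ n).sub_mem (hT x n) (hy n)
    simpa using this
  -- t n is "approximately" a ring hom
  have hTsub : ∀ (x : k) (n : ℕ), T x - t n x ∈ maximalIdeal A ^ n := hT
  have pow_le : ∀ n : ℕ, maximalIdeal A ^ (n + 1) ≤ maximalIdeal A ^ n :=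
    fun n => Ideal.pow_le_pow_right (by omega)
  have Tmul : ∀ x y, T (x * y) = T x * T y := by
    intro x y
    refine Tuniq _ _ (fun n => ?_)
    have h1 : residue A (σ₀ (φ.symm^[n] (x * y)))
        = residue A (σ₀ (φ.symm^[n] x) * σ₀ (φ.symm^[n] y)) := by
      rw [hσ₀, map_mul, hσ₀, hσ₀]
      induction n with
      | zero => simp
      | succ n ih => rw [Function.iterate_succ_apply', Function.iterate_succ_apply',
          Function.iterate_succ_apply', ← map_mul, ih]
    have h2 := hkey _ _ n h1
    rw [mul_pow] at h2
    have h3 : T x * T y - t n x * t n y ∈ maximalIdeal A ^ n := by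
      have : T x * T y - t n x * t n y
          = T x * (T y - t n y) + t n y * (T x - t n x) := by ring
      rw [this]
      exact (maximalIdeal A ^ n).add_mem
        (Ideal.mul_mem_left _ _ (hT y n)) (Ideal.mul_mem_left _ _ (hT x n))
    have := (maximalIdeal A ^ n).sub_mem h3 ((pow_le n) h2)
    simpa [ht] using this
  have Tadd : ∀ x y, T (x + y) = T x + T y := by
    intro x y
    refine Tuniq _ _ (fun n => ?_)
    have h1 : residue A (σ₀ (φ.symm^[n] (x + y)))
        = residue A (σ₀ (φ.symm^[n] x) + σ₀ (φ.symm^[n] y)) := by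
      rw [hσ₀, map_add, hσ₀, hσ₀]
      induction n with
      | zero => simp
      | succ n ih => rw [Function.iterate_succ_apply', Function.iterate_succ_apply',
          Function.iterate_succ_apply', ← map_add, ih]
    have h2 := hkey _ _ n h1
    rw [add_pow_char_pow] at h2
    have h3 : T x + T y - (t n x + t n y) ∈ maximalIdeal A ^ n := by
      have : T x + T y - (t n x + t n y) = (T x - t n x) + (T y - t n y) := by ring
      rw [this]
      exact (maximalIdeal A ^ n).add_mem (hT x n) (hT y n)
    have := (maximalIdeal A ^ n).sub_mem h3 ((pow_le n) h2)
    simpa [ht] using this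
  have Tone : T 1 = 1 := by
    refine Tuniq _ _ (fun n => ?_)
    have h1 : residue A (σ₀ (φ.symm^[n] (1 : k))) = residue A 1 := by
      rw [hσ₀, map_one]
      induction n with
      | zero => simp
      | succ n ih => rw [Function.iterate_succ_apply', ← ih]; simp
    have h2 := hkey _ _ n h1
    rw [one_pow] at h2
    have : (1:A) - t n 1 ∈ maximalIdeal A ^ (n+1) := by
      simpa [ht] using (maximalIdeal A ^ (n+1)).neg_mem_iff.mpr h2
    exact pow_le n this
  have Tzero : T 0 = 0 := by
    refine Tuniq _ _ (fun n => ?_)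
    have h1 : residue A (σ₀ (φ.symm^[n] (0 : k))) = residue A 0 := by
      rw [hσ₀, map_zero]
      induction n with
      | zero => simp
      | succ n ih => rw [Function.iterate_succ_apply', ← ih]; simp
    have h2 := hkey _ _ n h1
    rw [zero_pow (pow_ne_zero n hp.ne_zero)] at h2
    have : (0:A) - t n 0 ∈ maximalIdeal A ^ (n+1) := by
      simpa [ht] using (maximalIdeal A ^ (n+1)).neg_mem_iff.mpr h2
    exact pow_le n this
  refine ⟨{ toFun := T, map_one' := Tone, map_mul' := Tmul,
            map_zero' := Tzero, map_add' := Tadd }, fun x => ?_⟩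
  show residue A (T x) = x
  have h1 : T x - t 1 x ∈ maximalIdeal A := by simpa using hT x 1
  rw [res_eq_of_sub_mem h1, hres_t]

theorem exists_section_char_zero (hA : CharP A 0) (hk : CharP (ResidueField A) 0) :
    ∃ s : ResidueField A →+* A, ∀ x, residue A (s x) = x := by
  classical
  haveI : CharZero A := CharP.charP_to_charZero A
  haveI : CharZero (ResidueField A) := CharP.charP_to_charZero _
  set k := ResidueField A with hkdef
  have hunit : ∀ a : A, residue A a ≠ 0 → IsUnit a := by
    intro a ha
    by_contra h
    exact ha (Ideal.Quotient.eq_zero_iff_mem.mpr h)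
  -- the base field ℚ inside A
  have hQunit : ∀ y : nonZeroDivisors ℤ, IsUnit ((Int.castRingHom A) y) := by
    intro y
    refine hunit _ ?_
    have hy : (y : ℤ) ≠ 0 := nonZeroDivisors.coe_ne_zero y
    show residue A ((y : ℤ) : A) ≠ 0
    rw [map_intCast]
    exact_mod_cast Int.cast_ne_zero.mpr hy
  set Q : ℚ →+* A := IsLocalization.lift (M := nonZeroDivisors ℤ) (S := ℚ) hQunit with hQ
  -- the collection of subfields
  set SF : Set (Subring A) := {K | ∀ x ∈ K, x ≠ 0 → ∃ y ∈ K, x * y = 1} with hSF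
  have hK₀ : Q.range ∈ SF := by
    rintro x ⟨q, rfl⟩ hx
    have hq : q ≠ 0 := fun h => hx (by rw [h, map_zero])
    exact ⟨Q q⁻¹, ⟨q⁻¹, rfl⟩, by rw [← map_mul, mul_inv_cancel₀ hq, map_one]⟩
  obtain ⟨K, hKS⟩ : ∃ K, Maximal (· ∈ SF) K := by
    refine zorn_le₀ SF (fun c hc hchain => ?_)
    rcases c.eq_empty_or_nonempty with rfl | hne
    · exact ⟨Q.range, hK₀, fun z hz => absurd hz (Set.notMem_empty z)⟩
    · haveI : Nonempty c := hne.to_subtype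
      have hdir : Directed (· ≤ ·) (fun i : c => (i : Subring A)) :=
        hchain.directed
      refine ⟨⨆ i : c, (i : Subring A), ?_, fun z hz => le_iSup (fun i : c => (i : Subring A)) ⟨z, hz⟩⟩
      intro x hx hx0
      rw [Subring.mem_iSup_of_directed hdir] at hx
      obtain ⟨i, hi⟩ := hx
      obtain ⟨y, hy, hxy⟩ := hc i.2 x hi hx0
      exact ⟨y, (Subring.mem_iSup_of_directed hdir).mpr ⟨i, hy⟩, hxy⟩
  -- K is a field
  have hfield : ∀ x ∈ K, x ≠ 0 → ∃ y ∈ K, x * y = 1 := hKS.1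
  have hIsField : IsField K := by
    refine ⟨⟨0, 1, ?_⟩, mul_comm, ?_⟩
    · intro h; exact zero_ne_one (congrArg Subtype.val h)
    · intro a ha
      have hav : (a : A) ≠ 0 := fun h => ha (Subtype.ext h)
      obtain ⟨y, hy, hxy⟩ := hfield a a.2 hav
      exact ⟨⟨y, hy⟩, Subtype.ext hxy⟩
  letI : Field K := hIsField.toField
  haveI : CharZero K := ⟨fun m n h => by
    have := congrArg K.subtype h
    push_cast at this
    exact Nat.cast_injective this⟩
  -- residue restricted to K
  set ρ : K →+* k := (residue A).comp K.subtype with hρ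
  have hρinj : Function.Injective ρ := by
    intro z w hzw
    by_contra hne
    have hsub : (z - w : K) ≠ 0 := sub_ne_zero.mpr hne
    have hval : ((z - w : K) : A) ≠ 0 := fun h => hsub (Subtype.ext h)
    obtain ⟨y, hy, hxy⟩ := hfield _ (z - w).2 hval
    have h0 : residue A ((z - w : K) : A) = 0 := by
      have : ρ (z - w) = 0 := by rw [map_sub, hzw, sub_self]
      exact this
    have : (1 : k) = 0 := by
      have := congrArg (residue A) hxy
      rw [map_mul, map_one, h0, zero_mul] at this
      exact this.symm
    exact one_ne_zero this
  letI : Algebra K A := K.subtype.toAlgebra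
  letI : Algebra K k := ρ.toAlgebra
  have hcomm : ∀ (a₀ : A) (g : Polynomial K),
      residue A (aeval a₀ g) = aeval (residue A a₀) g := by
    intro a₀ g
    rw [aeval_def, aeval_def, hom_eval₂]
    rfl

  have hsurj : ∀ x : k, ∃ a : A, a ∈ K ∧ residue A a = x := by
    intro x
    obtain ⟨a₀, ha₀⟩ := IsLocalRing.residue_surjective (R := A) x
    by_cases halg : IsAlgebraic K x
    · -- algebraic case: Hensel lifting
      have hint : IsIntegral K x := halg.isIntegral
      set f : Polynomial K := minpoly K x with hf
      have hirr : Irreducible f := minpoly.irreducible hint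
      have hmon : f.Monic := minpoly.monic hint
      have hsep : f.Separable := hirr.separable
      set fA : Polynomial A := f.map K.subtype with hfA
      have hmonA : fA.Monic := hmon.map _
      have heval : ∀ b : A, fA.eval b = aeval b f := by
        intro b; rw [hfA, eval_map]; rfl
      have hevald : ∀ b : A, fA.derivative.eval b = aeval b (derivative f) := by
        intro b; rw [hfA, derivative_map, eval_map]; rfl
      have h1 : fA.eval a₀ ∈ maximalIdeal A := by
        rw [← Ideal.Quotient.eq_zero_iff_mem]
        show residue A _ = 0
        rw [heval, hcomm, ha₀]
        exact minpoly.aeval K x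
      have hd0 : (aeval x (derivative f) : k) ≠ 0 := by
        obtain ⟨u, v, huv⟩ := hsep
        intro hcontra
        have := congrArg (aeval x) huv
        rw [map_add, map_mul, map_mul, minpoly.aeval, mul_zero, hcontra, mul_zero,
          add_zero, map_one] at this
        exact zero_ne_one this
      have h2 : IsUnit (Ideal.Quotient.mk (maximalIdeal A) (fA.derivative.eval a₀)) := by
        have : residue A (fA.derivative.eval a₀) = aeval x (derivative f) := by
          rw [hevald, hcomm, ha₀]
        show IsUnit (residue A (fA.derivative.eval a₀))
        rw [this]
        exact isUnit_iff_ne_zero.mpr hd0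
      obtain ⟨a, haroot, hamem⟩ :=
        HenselianRing.is_henselian (I := maximalIdeal A) fA hmonA a₀ h1 h2
      have hares : residue A a = x := by
        have : residue A (a - a₀) = 0 := Ideal.Quotient.eq_zero_iff_mem.mpr hamem
        rw [map_sub, sub_eq_zero] at this
        rw [this, ha₀]
      -- K[a] is a subfield
      have hfa0 : aeval a f = 0 := by rw [← heval]; exact haroot
      set K' : Subring A := (Algebra.adjoin K ({a} : Set A)).toSubring with hK'
      have hKK' : K ≤ K' := by
        intro c hc
        have : (algebraMap K A) ⟨c, hc⟩ ∈ Algebra.adjoin K ({a} : Set A) :=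
          Subalgebra.algebraMap_mem _ _
        exact this
      have haK' : a ∈ K' := Algebra.self_mem_adjoin_singleton K a
      have hK'S : K' ∈ SF := by
        intro z hz hz0
        rw [hK', Subalgebra.mem_toSubring, Algebra.adjoin_singleton_eq_range_aeval,
          AlgHom.mem_range] at hz
        obtain ⟨g, hg⟩ := hz
        set r := g %ₘ f with hr
        have hra : aeval a r = z := by
          have hdivmod := modByMonic_add_div g f
          have := congrArg (aeval a) hdivmod
          rw [map_add, map_mul, hfa0, zero_mul, add_zero] at this
          rw [hr, this, hg]
        have hr0 : r ≠ 0 := fun h => hz0 (by rw [← hra, h, map_zero])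
        have hdeg : r.degree < f.degree := degree_modByMonic_lt g hmon
        have hndvd : ¬ f ∣ r := fun hd =>
          absurd (degree_le_of_dvd hd hr0) (not_le.mpr hdeg)
        obtain ⟨u, v, huv⟩ := (hirr.coprime_iff_not_dvd).mpr hndvd
        have := congrArg (aeval a) huv
        rw [map_add, map_mul, map_mul, hfa0, mul_zero, zero_add, map_one, hra] at this
        refine ⟨aeval a v, ?_, by rw [mul_comm]; exact this⟩
        rw [hK', Subalgebra.mem_toSubring, Algebra.adjoin_singleton_eq_range_aeval,
          AlgHom.mem_range]
        exact ⟨v, rfl⟩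
      have : K' ≤ K := hKS.2 hK'S hKK'
      exact ⟨a, this haK', hares⟩
    · -- transcendental case
      have hunit' : ∀ g : Polynomial K, g ≠ 0 → IsUnit (aeval a₀ g) := by
        intro g hg0
        refine hunit _ ?_
        rw [hcomm, ha₀]
        intro hcontra
        exact halg ⟨g, hg0, hcontra⟩
      set K' : Subring A :=
        { carrier := {z | ∃ g h : Polynomial K, h ≠ 0 ∧ (aeval a₀ h) * z = aeval a₀ g}
          zero_mem' := ⟨0, 1, (one_ne_zero : (1 : Polynomial K) ≠ 0), by simp⟩
          one_mem' := ⟨1, 1, (one_ne_zero : (1 : Polynomial K) ≠ 0), by simp⟩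
          add_mem' := by
            rintro z1 z2 ⟨g1, h1, h1n, e1⟩ ⟨g2, h2, h2n, e2⟩
            refine ⟨h2 * g1 + h1 * g2, h1 * h2, mul_ne_zero h1n h2n, ?_⟩
            simp only [map_add, map_mul]
            linear_combination (aeval a₀ h2) * e1 + (aeval a₀ h1) * e2
          mul_mem' := by
            rintro z1 z2 ⟨g1, h1, h1n, e1⟩ ⟨g2, h2, h2n, e2⟩
            refine ⟨g1 * g2, h1 * h2, mul_ne_zero h1n h2n, ?_⟩
            simp only [map_mul]
            linear_combination (aeval a₀ h2 * z2) * e1 + (aeval a₀ g1) * e2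
          neg_mem' := by
            rintro z ⟨g, h, hn, e⟩
            exact ⟨-g, h, hn, by rw [map_neg]; linear_combination -e⟩ } with hK'
      have hKK' : K ≤ K' := by
        intro c hc
        exact ⟨Polynomial.C ⟨c, hc⟩, 1, (one_ne_zero : (1 : Polynomial K) ≠ 0), by simp [aeval_C]; rfl⟩
      have haK' : a₀ ∈ K' := ⟨Polynomial.X, 1, (one_ne_zero : (1 : Polynomial K) ≠ 0), by simp⟩
      have hK'S : K' ∈ SF := by
        rintro z ⟨g, h, hn, e⟩ hz0
        have hgu := hunit' h hn
        have hg0 : g ≠ 0 := by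
          intro hg
          rw [hg, map_zero] at e
          rcases mul_eq_zero.mp e with h' | h'
          · exact hgu.ne_zero h'
          · exact hz0 h'
        have hgu2 := hunit' g hg0
        set u := hgu2.unit with hu
        have hu1 : (aeval a₀ g) * (↑u⁻¹ : Aˣ) = 1 := by
          rw [← hgu2.unit_spec]; exact u.mul_inv
        refine ⟨aeval a₀ h * ↑u⁻¹, ⟨h, g, hg0, ?_⟩, ?_⟩
        · calc (aeval a₀ g) * (aeval a₀ h * ↑u⁻¹)
              = (aeval a₀ h) * ((aeval a₀ g) * ↑u⁻¹) := by ring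
            _ = aeval a₀ h := by rw [hu1, mul_one]
        · calc z * (aeval a₀ h * ↑u⁻¹) = (aeval a₀ h * z) * ↑u⁻¹ := by ring
            _ = aeval a₀ g * ↑u⁻¹ := by rw [e]
            _ = 1 := hu1
      have : K' ≤ K := hKS.2 hK'S hKK'
      exact ⟨a₀, this haK', ha₀⟩
  -- build the section
  have hρsurj : Function.Surjective ρ := by
    intro x
    obtain ⟨a, haK, hares⟩ := hsurj x
    exact ⟨⟨a, haK⟩, hares⟩
  set e : K ≃+* k := RingEquiv.ofBijective ρ ⟨hρinj, hρsurj⟩ with he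
  refine ⟨K.subtype.comp e.symm.toRingHom, fun x => ?_⟩
  show residue A ((e.symm x : K) : A) = x
  have : ρ (e.symm x) = x := e.apply_symm_apply x
  exact this


/-- Cohen structure theorem, equicharacteristic DVR case: a complete discrete
valuation ring whose residue field is perfect and of the same characteristic as the
ring is isomorphic to the power series ring over its residue field. -/
theorem stmt9 (A : Type) [CommRing A] [IsDomain A] [IsDiscreteValuationRing A]
    [IsAdicComplete (maximalIdeal A) A]
    (p : ℕ) (hA : CharP A p) (hk : CharP (ResidueField A) p)
    [PerfectField (ResidueField A)] :
    Nonempty (A ≃+* PowerSeries (ResidueField A)) := by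
  rcases CharP.char_is_prime_or_zero A p with hp | hp
  · obtain ⟨s, hs⟩ := exists_section_char_p p hp hA hk
    exact equiv_of_section s hs
  · subst hp
    obtain ⟨s, hs⟩ := exists_section_char_zero hA hk
    exact equiv_of_section s hs
end

section
/- Let k be a field, A a k-algebra, and M, N two A-modules. Then there is a natural isomorphism of A-modules M ⊗_A N ≅ A ⊗_{A ⊗_k A} (M ⊗_k N), where A is an A ⊗_k A-algebra via the multiplication map and M ⊗_k N is an A ⊗_k A-module via the two factors. -/
open TensorProduct

noncomputable section

variable (k A M N : Type) [Field k] [CommRing A] [Algebra k A]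
  [AddCommGroup M] [Module k M] [Module A M] [IsScalarTower k A M]
  [AddCommGroup N] [Module k N] [Module A N] [IsScalarTower k A N]

/-- The action of `A ⊗_k A` on `M ⊗_k N` through the two factors:
`(a ⊗ b) • (m ⊗ n) = (a • m) ⊗ (b • n)`. -/
def factorwiseModule : Module (A ⊗[k] A) (M ⊗[k] N) :=
  Module.compHom _
    ((Module.endTensorEndAlgHom (R := k) (S := k) (A := k) (M := M) (N := N)).comp
      (Algebra.TensorProduct.map (Algebra.lsmul k k M) (Algebra.lsmul k k N))).toRingHom

/-- The action of `A ⊗_k A` on `A` through the multiplication map `a ⊗ b ↦ ab`. -/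
def diagonalModule : Module (A ⊗[k] A) A :=
  Module.compHom _ (Algebra.TensorProduct.lmul' k (S := A)).toRingHom

attribute [local instance] factorwiseModule diagonalModule

def bigAModule : Module A (TensorProduct (A ⊗[k] A) A (M ⊗[k] N)) :=
  Module.compHom _ (Algebra.TensorProduct.includeLeftRingHom (R := k) (A := A) (B := A))

lemma fw_smul (a b : A) (m : M) (n : N) :
    (a ⊗ₜ[k] b) • (m ⊗ₜ[k] n) = (a • m) ⊗ₜ[k] (b • n) := rfl

lemma diag_smul (x : A ⊗[k] A) (c : A) :
    x • c = Algebra.TensorProduct.lmul' k x * c := rfl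

/-- canonical map `M ⊗[k] N →+ M ⊗[A] N` -/
def toBase : M ⊗[k] N →+ M ⊗[A] N :=
  TensorProduct.liftAddHom
    { toFun := fun m => AddMonoidHom.mk' (fun n => m ⊗ₜ[A] n) (fun _ _ => tmul_add _ _ _)
      map_zero' := by ext n; simp
      map_add' := fun m m' => by ext n; simp [add_tmul] }
    (fun c m n => by
      show (c • m) ⊗ₜ[A] n = m ⊗ₜ[A] (c • n)
      rw [← algebraMap_smul A c m, ← algebraMap_smul A c n, smul_tmul])

@[simp] lemma toBase_tmul (m : M) (n : N) : toBase k A M N (m ⊗ₜ[k] n) = m ⊗ₜ[A] n := rfl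

lemma toBase_smul (x y : A) (t : M ⊗[k] N) :
    toBase k A M N ((x ⊗ₜ[k] y) • t) = (x * y) • toBase k A M N t := by
  induction t with
  | zero => simp
  | tmul m n =>
    rw [fw_smul, toBase_tmul, toBase_tmul]
    simp [tmul_smul, smul_tmul', smul_smul, mul_comm]
  | add t t' ht ht' => rw [smul_add, map_add, ht, ht', map_add, smul_add]

def backward : TensorProduct (A ⊗[k] A) A (M ⊗[k] N) →+ M ⊗[A] N :=
  TensorProduct.liftAddHom
    { toFun := fun a => AddMonoidHom.mk' (fun t => a • toBase k A M N t)
        (fun t t' => by rw [map_add, smul_add])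
      map_zero' := by ext t; simp
      map_add' := fun a a' => by ext t; simp [add_smul]
      }
    (fun r a t => by
      show (r • a) • toBase k A M N t = a • toBase k A M N (r • t)
      induction r with
      | zero => simp
      | tmul x y =>
        rw [diag_smul, toBase_smul]
        show (Algebra.TensorProduct.lmul' (S := A) k (x ⊗ₜ[k] y) * a) • _ = _
        rw [Algebra.TensorProduct.lmul'_apply_tmul, smul_comm a, ← mul_smul]
      | add r r' hr hr' =>
        rw [add_smul, add_smul, hr, hr', add_smul, map_add, smul_add])

@[simp] lemma backward_tmul (a : A) (t : M ⊗[k] N) :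
    backward k A M N (a ⊗ₜ t) = a • toBase k A M N t := rfl

def forward : M ⊗[A] N →+ TensorProduct (A ⊗[k] A) A (M ⊗[k] N) :=
  TensorProduct.liftAddHom
    { toFun := fun m => AddMonoidHom.mk' (fun n => (1 : A) ⊗ₜ (m ⊗ₜ[k] n))
        (fun n n' => by rw [tmul_add, tmul_add])
      map_zero' := by ext n; simp [zero_tmul]
      map_add' := fun m m' => by ext n; rw [AddMonoidHom.add_apply,
        AddMonoidHom.mk'_apply, AddMonoidHom.mk'_apply, AddMonoidHom.mk'_apply,
        add_tmul, tmul_add] }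
    (fun a m n => by
      show (1 : A) ⊗ₜ ((a • m) ⊗ₜ[k] n) = (1 : A) ⊗ₜ (m ⊗ₜ[k] (a • n))
      have h1 : (a • m) ⊗ₜ[k] n = (a ⊗ₜ[k] (1 : A)) • (m ⊗ₜ[k] n) := by
        rw [fw_smul, one_smul]
      have h2 : m ⊗ₜ[k] (a • n) = ((1 : A) ⊗ₜ[k] a) • (m ⊗ₜ[k] n) := by
        rw [fw_smul, one_smul]
      rw [h1, h2, tmul_smul, tmul_smul, smul_tmul', smul_tmul', diag_smul, diag_smul,
        Algebra.TensorProduct.lmul'_apply_tmul, Algebra.TensorProduct.lmul'_apply_tmul]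
      ring_nf)

@[simp] lemma forward_tmul (m : M) (n : N) :
    forward k A M N (m ⊗ₜ[A] n) = (1 : A) ⊗ₜ (m ⊗ₜ[k] n) := rfl

lemma smul_one_tmul (a : A) (t : M ⊗[k] N) :
    ((a ⊗ₜ[k] (1 : A)) • ((1 : A) ⊗ₜ t : TensorProduct (A ⊗[k] A) A (M ⊗[k] N)))
      = a ⊗ₜ t := by
  rw [smul_tmul', diag_smul, Algebra.TensorProduct.lmul'_apply_tmul]
  ring_nf

lemma forward_smul_toBase (a : A) (t : M ⊗[k] N) :
    forward k A M N (a • toBase k A M N t) = a ⊗ₜ t := by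
  induction t with
  | zero => simp
  | tmul m n =>
    rw [toBase_tmul]
    have h0 : a • (m ⊗ₜ[A] n) = (a • m) ⊗ₜ[A] n := (smul_tmul' a m n).symm
    have h1 : (a • m) ⊗ₜ[k] n = (a ⊗ₜ[k] (1 : A)) • (m ⊗ₜ[k] n) := by
      rw [fw_smul, one_smul]
    rw [h0, forward_tmul, h1, tmul_smul]
    exact smul_one_tmul k A M N a (m ⊗ₜ[k] n)
  | add t t' ht ht' =>
    rw [map_add, smul_add, map_add, ht, ht', tmul_add]

lemma forward_Asmul (a : A) (x : M ⊗[A] N) :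
    forward k A M N (a • x) = (a ⊗ₜ[k] (1 : A)) • forward k A M N x := by
  induction x with
  | zero => rw [smul_zero, map_zero, smul_zero]
  | tmul m n =>
    have h0 : a • (m ⊗ₜ[A] n) = (a • m) ⊗ₜ[A] n := (smul_tmul' a m n).symm
    have h1 : (a • m) ⊗ₜ[k] n = (a ⊗ₜ[k] (1 : A)) • (m ⊗ₜ[k] n) := by
      rw [fw_smul, one_smul]
    rw [h0, forward_tmul, forward_tmul, h1, tmul_smul]
  | add x y hx hy => rw [smul_add, map_add, hx, hy, map_add, smul_add]

lemma backward_forward (x : M ⊗[A] N) : backward k A M N (forward k A M N x) = x := by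
  induction x with
  | zero => simp
  | tmul m n => rw [forward_tmul, backward_tmul, toBase_tmul, one_smul]
  | add x y hx hy => rw [map_add, map_add, hx, hy]

lemma forward_backward (z : TensorProduct (A ⊗[k] A) A (M ⊗[k] N)) :
    forward k A M N (backward k A M N z) = z := by
  induction z with
  | zero => simp
  | tmul a t => rw [backward_tmul, forward_smul_toBase]
  | add z z' hz hz' => rw [map_add, map_add, hz, hz']

def theEquiv :
    letI : Module A (TensorProduct (A ⊗[k] A) A (M ⊗[k] N)) := bigAModule k A M N
    (M ⊗[A] N) ≃ₗ[A] TensorProduct (A ⊗[k] A) A (M ⊗[k] N) := by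
  letI : Module A (TensorProduct (A ⊗[k] A) A (M ⊗[k] N)) := bigAModule k A M N
  exact
  { toFun := forward k A M N
    map_add' := map_add _
    map_smul' := fun a x => by
      show forward k A M N (a • x)
          = ((a ⊗ₜ[k] (1 : A)) • forward k A M N x :
              TensorProduct (A ⊗[k] A) A (M ⊗[k] N))
      exact forward_Asmul k A M N a x
    invFun := backward k A M N
    left_inv := backward_forward k A M N
    right_inv := forward_backward k A M N }

/-- Reduction to the diagonal: `M ⊗_A N ≅ A ⊗_{A ⊗_k A} (M ⊗_k N)` as `A`-modules. -/
theorem stmt12 :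
    letI : Module (A ⊗[k] A) (M ⊗[k] N) := factorwiseModule k A M N
    letI : Module (A ⊗[k] A) A := diagonalModule k A
    letI : Module A (TensorProduct (A ⊗[k] A) A (M ⊗[k] N)) :=
      Module.compHom _ (Algebra.TensorProduct.includeLeftRingHom (R := k) (A := A) (B := A))
    Nonempty ((TensorProduct A M N) ≃ₗ[A] TensorProduct (A ⊗[k] A) A (M ⊗[k] N)) :=
  ⟨theEquiv k A M N⟩

end
end
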